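/- arXiv:1709.02952 — 8 statements merged into one kernel-verified Lean document; each statement's English description precedes it below -/
import Mathlib

section
/- Let $\{D_1,\dots,D_m\}$ be a partition of an abelian group $G$ of order $v$ with $|D_i|=k_i$. Then $\{D_1,\dots,D_m\}$ is a $(v,m;k_1,\dots,k_m;\lambda_1,\dots,\lambda_m)$-GSEDF if and only if each $D_i$ is a $(v,k_i,k_i-\lambda_i)$-difference set in $G$. -/
/-- The number of times `g` occurs in the multiset `Δ(A,B) = {x - y : x ∈ A, y ∈ B}`. -/
noncomputable def extDiffCount {G : Type*} [AddCommGroup G] (A B : Finset G) (g : G) : ℕ :=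
  letI := Classical.decEq G
  ((A ×ˢ B).filter (fun p => p.1 - p.2 = g)).card

/-- `{D i}` is a `(v, m; k₁,…,k_m; λ₁,…,λ_m)`-GSEDF in the finite abelian group `G`. -/
def IsGSEDF {G : Type*} [AddCommGroup G] [Fintype G] (v m : ℕ)
    (D : Fin m → Finset G) (k lam : Fin m → ℕ) : Prop :=
  Fintype.card G = v ∧
  (∀ i, (D i).card = k i) ∧
  (∀ i, 0 < k i) ∧ (∀ i, 0 < lam i) ∧
  (∀ i j, i ≠ j → Disjoint (D i) (D j)) ∧
  ∀ i, ∀ g : G, g ≠ 0 →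
    (∑ j ∈ Finset.univ.filter (· ≠ i), extDiffCount (D i) (D j) g) = lam i

lemma extDiffCount_eq {G : Type*} [AddCommGroup G] [DecidableEq G] (A B : Finset G) (g : G) :
    extDiffCount A B g = (A.filter (fun x => x - g ∈ B)).card := by
  classical
  unfold extDiffCount
  rw [Finset.filter_congr_decidable]
  apply Finset.card_bij (fun p _ => p.1)
  · intro p hp
    simp only [Finset.mem_filter, Finset.mem_product] at hp ⊢
    refine ⟨hp.1.1, ?_⟩
    have he : p.1 - g = p.2 := by
      rw [← hp.2, sub_sub_cancel]
    rw [he]; exact hp.1.2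
  · intro p hp q hq h
    simp only [Finset.mem_filter, Finset.mem_product] at hp hq
    have h2 : p.2 = q.2 := by
      have e1 : p.2 = p.1 - g := by rw [← hp.2, sub_sub_cancel]
      have e2 : q.2 = q.1 - g := by rw [← hq.2, sub_sub_cancel]
      rw [e1, e2, h]
    exact Prod.ext h h2
  · intro x hx
    simp only [Finset.mem_filter] at hx
    exact ⟨(x, x - g), by simp [Finset.mem_filter, Finset.mem_product, hx.1, hx.2], rfl⟩

/-- for a partition of `G`, GSEDF iff each `D i` is a `(v, k i, k i - lam i)`-difference
set (the condition is stated subtraction-free). -/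
theorem gsedf_iff_diffSet {G : Type*} [AddCommGroup G] [Fintype G] (v m : ℕ)
    (D : Fin m → Finset G) (k lam : Fin m → ℕ)
    (hv : Fintype.card G = v)
    (hcard : ∀ i, (D i).card = k i)
    (hk : ∀ i, 0 < k i) (hlam : ∀ i, 0 < lam i)
    (hdisj : ∀ i j, i ≠ j → Disjoint (D i) (D j))
    (hcover : ∀ x : G, ∃ i, x ∈ D i) :
    IsGSEDF v m D k lam ↔
      ∀ i, ∀ g : G, g ≠ 0 → extDiffCount (D i) (D i) g + lam i = k i := by
  classical
  -- total sum over all j equals k i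
  have htot : ∀ i (g : G),
      (∑ j : Fin m, extDiffCount (D i) (D j) g) = k i := by
    intro i g
    have : (∑ j : Fin m, extDiffCount (D i) (D j) g)
        = ∑ x ∈ D i, ∑ j : Fin m, (if x - g ∈ D j then 1 else 0) := by
      rw [Finset.sum_comm]
      refine Finset.sum_congr rfl fun j _ => ?_
      rw [extDiffCount_eq, Finset.card_filter]
    rw [this]
    have hone : ∀ x ∈ D i, (∑ j : Fin m, (if x - g ∈ D j then (1:ℕ) else 0)) = 1 := by
      intro x _
      obtain ⟨j0, hj0⟩ := hcover (x - g)
      rw [Finset.sum_eq_single j0]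
      · simp [hj0]
      · intro j _ hne
        have : x - g ∉ D j := fun hmem =>
          Finset.disjoint_left.mp (hdisj j j0 hne) hmem hj0
        simp [this]
      · simp
    rw [Finset.sum_congr rfl hone, Finset.sum_const, smul_eq_mul, mul_one, hcard]
  have hsplit : ∀ i (g : G),
      extDiffCount (D i) (D i) g
        + (∑ j ∈ Finset.univ.filter (· ≠ i), extDiffCount (D i) (D j) g) = k i := by
    intro i g
    rw [Finset.filter_ne',
      Finset.add_sum_erase Finset.univ (fun j => extDiffCount (D i) (D j) g) (Finset.mem_univ i)]
    exact htot i g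
  constructor
  · rintro ⟨-, -, -, -, -, h⟩ i g hg
    have := hsplit i g
    rw [h i g hg] at this
    exact this
  · intro h
    refine ⟨hv, hcard, hk, hlam, hdisj, fun i g hg => ?_⟩
    have h1 := hsplit i g
    have h2 := h i g hg
    omega
end

section
/- Let $\{D_1,\dots,D_m\}$ be a partition of $G\setminus\{0\}$ for an abelian group $G$ of order $v$, with $|D_i|=k_i$. Then $\{D_1,\dots,D_m\}$ is a $(v,m;k_1,\dots,k_m;\lambda_1,\dots,\lambda_m)$-GSEDF if and only if each $D_i$ is a $(v,k_i,k_i-\lambda_i-1,k_i-\lambda_i)$-partial difference set in $G$. -/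
open Finset in
lemma extDiffCount_eq_filter {G : Type*} [AddCommGroup G] [DecidableEq G]
    (A B : Finset G) (g : G) :
    extDiffCount A B g = (A.filter fun x => x - g ∈ B).card := by
  classical
  unfold extDiffCount
  apply Finset.card_bij (fun p _ => p.1)
  · intro p hp
    simp only [mem_filter, mem_product] at hp ⊢
    have h2 : p.2 = p.1 - g := by
      have := hp.2
      abel_nf
      linear_combination (norm := abel) -hp.2
    exact ⟨hp.1.1, h2 ▸ hp.1.2⟩
  · intro p hp q hq hpq
    simp only [mem_filter, mem_product] at hp hq
    have h2 : p.2 = p.1 - g := by linear_combination (norm := abel) -hp.2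
    have h2' : q.2 = q.1 - g := by linear_combination (norm := abel) -hq.2
    ext
    · exact hpq
    · rw [h2, h2', hpq]
  · intro x hx
    simp only [mem_filter, mem_product] at hx
    exact ⟨(x, x - g), by simp [hx.1, hx.2], rfl⟩

open Finset in
/-- Key counting identity: summing the difference counts over all blocks. -/
lemma key_sum {G : Type*} [AddCommGroup G] [Fintype G] [DecidableEq G] {m : ℕ}
    (D : Fin m → Finset G)
    (hdisj : ∀ i j, i ≠ j → Disjoint (D i) (D j))
    (h0 : ∀ i, (0 : G) ∉ D i)
    (hcover : ∀ x : G, x ≠ 0 → ∃ i, x ∈ D i)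
    (i : Fin m) (g : G) (hg : g ≠ 0) :
    (∑ j : Fin m, extDiffCount (D i) (D j) g)
      + (if g ∈ D i then 1 else 0) = (D i).card := by
  classical
  simp only [extDiffCount_eq_filter]
  have hstep : ∀ j : Fin m, (Finset.filter (fun x => x - g ∈ D j) (D i)).card
      = ∑ x ∈ D i, (if x - g ∈ D j then 1 else 0) := by
    intro j; rw [Finset.card_filter]
  simp only [hstep]
  rw [Finset.sum_comm]
  have hpt : ∀ x ∈ D i, (∑ j : Fin m, (if x - g ∈ D j then 1 else 0))
      = if x = g then 0 else 1 := by
    intro x hx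
    by_cases hxg : x = g
    · rw [if_pos hxg]
      refine Finset.sum_eq_zero fun j _ => ?_
      rw [hxg, sub_self, if_neg (h0 j)]
    · rw [if_neg hxg]
      have hne : x - g ≠ 0 := sub_ne_zero.mpr hxg
      obtain ⟨j₀, hj₀⟩ := hcover _ hne
      rw [Finset.sum_eq_single j₀]
      · simp [hj₀]
      · intro j _ hjj
        have : x - g ∉ D j := fun hmem =>
          (hdisj j j₀ hjj).forall_ne_finset hmem hj₀ rfl
        simp [this]
      · simp
  rw [Finset.sum_congr rfl hpt]
  have : (∑ x ∈ D i, if x = g then 0 else 1)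
      + (∑ x ∈ D i, if x = g then 1 else 0) = (D i).card := by
    rw [← Finset.sum_add_distrib]
    simp only [Finset.card_eq_sum_ones]
    refine Finset.sum_congr rfl fun x _ => ?_
    by_cases h : x = g <;> simp [h]
  have hind : (∑ x ∈ D i, if x = g then (1:ℕ) else 0) = if g ∈ D i then 1 else 0 := by
    simp [Finset.sum_ite_eq' (D i) g (fun _ => 1)]
  omega

/-- for a partition of `G \\ {0}`, GSEDF iff each `D i` is a
`(v, k i, k i - lam i - 1, k i - lam i)`-partial difference set (stated subtraction-free). -/
theorem gsedf_iff_partialDiffSet {G : Type*} [AddCommGroup G] [Fintype G] (v m : ℕ)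
    (D : Fin m → Finset G) (k lam : Fin m → ℕ)
    (hv : Fintype.card G = v)
    (hcard : ∀ i, (D i).card = k i)
    (hk : ∀ i, 0 < k i) (hlam : ∀ i, 0 < lam i)
    (hdisj : ∀ i j, i ≠ j → Disjoint (D i) (D j))
    (h0 : ∀ i, (0 : G) ∉ D i)
    (hcover : ∀ x : G, x ≠ 0 → ∃ i, x ∈ D i) :
    IsGSEDF v m D k lam ↔
      ∀ i, ∀ g : G, g ≠ 0 →
        (g ∈ D i → extDiffCount (D i) (D i) g + lam i + 1 = k i) ∧
        (g ∉ D i → extDiffCount (D i) (D i) g + lam i = k i) := by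
  classical
  have hsplit : ∀ (i : Fin m) (g : G),
      (∑ j : Fin m, extDiffCount (D i) (D j) g)
        = extDiffCount (D i) (D i) g
          + ∑ j ∈ Finset.univ.filter (· ≠ i), extDiffCount (D i) (D j) g := by
    intro i g
    have hfe : Finset.univ.filter (· ≠ i) = Finset.univ.erase i := by
      ext j; simp [Finset.mem_erase, and_comm]
    rw [hfe, ← Finset.add_sum_erase _ _ (Finset.mem_univ i)]
  constructor
  · rintro ⟨-, -, -, -, -, hG⟩ i g hg
    have hkey := key_sum D hdisj h0 hcover i g hg
    rw [hsplit, hG i g hg, hcard i] at hkey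
    constructor
    · intro hmem; rw [if_pos hmem] at hkey; omega
    · intro hmem; rw [if_neg hmem] at hkey; omega
  · intro h
    refine ⟨hv, hcard, hk, hlam, hdisj, fun i g hg => ?_⟩
    have hkey := key_sum D hdisj h0 hcover i g hg
    rw [hsplit, hcard i] at hkey
    obtain ⟨h1, h2⟩ := h i g hg
    by_cases hmem : g ∈ D i
    · have := h1 hmem; rw [if_pos hmem] at hkey; omega
    · have := h2 hmem; rw [if_neg hmem] at hkey; omega
end

section
/- Let $m\ge 3$, $k=k_1+\dots+k_m$ with $k_1\le\dots\le k_m$ positive integers, $v>1$, and suppose positive integers $\lambda_1,\dots,\lambda_m$ satisfy $\lambda_i(v-1)=k_i(k-k_i)$ for all $i$. Then $\lambda_1+\lambda_2+\dots+\lambda_{m-1} > \lambda_m$. -/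
/-- from the GSEDF parameter equations with `m ≥ 3` and `k₁ ≤ … ≤ k_m`,
`λ₁ + ⋯ + λ_{m-1} > λ_m`. -/
theorem gsedf_lambda_sum_gt (v m : ℕ) (hm : 3 ≤ m) (hv : 1 < v)
    (k lam : Fin m → ℕ)
    (hk : ∀ i, 0 < k i) (hlam : ∀ i, 0 < lam i)
    (hmono : Monotone k)
    (heq : ∀ i, lam i * (v - 1) = k i * ((∑ j, k j) - k i)) :
    lam ⟨m - 1, by omega⟩ <
      ∑ i ∈ Finset.univ.filter (· ≠ (⟨m - 1, by omega⟩ : Fin m)), lam i := by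
  set L : Fin m := ⟨m - 1, by omega⟩ with hLdef
  set K := ∑ j, k j with hKdef
  have hS : Finset.univ.filter (· ≠ L) = Finset.univ.erase L := Finset.filter_ne' _ _
  -- sum over the erased set
  have hsumS : (∑ i ∈ Finset.univ.erase L, k i) + k L = K := by
    rw [hKdef]; exact Finset.sum_erase_add _ _ (Finset.mem_univ L)
  -- key per-index bound
  have hkey : ∀ i ∈ Finset.univ.erase L, k i * (k L + 1) ≤ k i * (K - k i) := by
    intro i hi
    have hiL : i ≠ L := (Finset.mem_erase.mp hi).1
    -- find a third index
    have hne : ((Finset.univ : Finset (Fin m)) \ {i, L}).Nonempty := by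
      rw [← Finset.card_pos]
      have h1 : (Finset.univ : Finset (Fin m)).card - ({i, L} : Finset (Fin m)).card
          ≤ ((Finset.univ : Finset (Fin m)) \ {i, L}).card := Finset.le_card_sdiff _ _
      have h2 : ({i, L} : Finset (Fin m)).card ≤ 2 := Finset.card_insert_le _ _ |>.trans (by simp)
      have h3 : (Finset.univ : Finset (Fin m)).card = m := by simp
      omega
    obtain ⟨j0, hj0⟩ := hne
    have hj0i : j0 ≠ i := by
      intro h; simp [h] at hj0
    have hj0L : j0 ≠ L := by
      intro h; simp [h] at hj0
    have hsub : k j0 + (k i + k L) ≤ K := by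
      have hsubset : ({j0, i, L} : Finset (Fin m)) ⊆ Finset.univ := Finset.subset_univ _
      have := Finset.sum_le_sum_of_subset (f := k) hsubset
      rwa [Finset.sum_insert (by simp [hj0i, hj0L]), Finset.sum_pair hiL] at this
    have h1 := hk j0
    have h2 := hk i
    have h3 := hk L
    have : k L + 1 ≤ K - k i := by omega
    exact Nat.mul_le_mul_left _ this
  have hsum : (∑ i ∈ Finset.univ.erase L, k i) * (k L + 1)
      ≤ ∑ i ∈ Finset.univ.erase L, k i * (K - k i) := by
    rw [Finset.sum_mul]
    exact Finset.sum_le_sum hkey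
  -- positivity of K - k L
  have hpos : 0 < ∑ i ∈ Finset.univ.erase L, k i := by
    have h0 : (⟨0, by omega⟩ : Fin m) ≠ L := by
      intro h
      have : (⟨0, by omega⟩ : Fin m).val = L.val := by rw [h]
      simp [hLdef] at this
      omega
    calc 0 < k ⟨0, by omega⟩ := hk _
      _ ≤ _ := Finset.single_le_sum (fun i _ => Nat.zero_le _)
          (Finset.mem_erase.mpr ⟨h0, Finset.mem_univ _⟩)
  -- main chain multiplied by (v-1)
  have hmul : lam L * (v - 1) < (∑ i ∈ Finset.univ.erase L, lam i) * (v - 1) := by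
    rw [heq L, Finset.sum_mul]
    calc k L * (K - k L) = (K - k L) * k L := Nat.mul_comm _ _
      _ < (K - k L) * (k L + 1) := by
          have hp : 0 < K - k L := by omega
          exact Nat.mul_lt_mul_of_pos_left (by omega) hp
      _ = (∑ i ∈ Finset.univ.erase L, k i) * (k L + 1) := by
          congr 1; omega
      _ ≤ ∑ i ∈ Finset.univ.erase L, k i * (K - k i) := hsum
      _ = ∑ i ∈ Finset.univ.erase L, lam i * (v - 1) := by
          apply Finset.sum_congr rfl
          intro i _
          exact (heq i).symm
  rw [hS]
  exact Nat.lt_of_mul_lt_mul_right hmul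
end

section
/- Let $x_1,\dots,x_n$ be positive real numbers with $n\ge 2$. Then $\sqrt{1+x_1}+\sqrt{1+x_2}+\dots+\sqrt{1+x_n} > n-1+\sqrt{1+x_1+x_2+\dots+x_n}$. -/
lemma key_sqrt_two (a b : ℝ) (ha : 0 < a) (hb : 0 < b) :
    1 + Real.sqrt (1 + (a + b)) < Real.sqrt (1 + a) + Real.sqrt (1 + b) := by
  have h1 : Real.sqrt (1 + a) ^ 2 = 1 + a := Real.sq_sqrt (by linarith)
  have h2 : Real.sqrt (1 + b) ^ 2 = 1 + b := Real.sq_sqrt (by linarith)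
  have h3 : Real.sqrt (1 + (a + b)) ^ 2 = 1 + (a + b) := Real.sq_sqrt (by linarith)
  have hu : 1 < Real.sqrt (1 + a) := by
    nlinarith [Real.sqrt_nonneg (1 + a)]
  have hv : 1 < Real.sqrt (1 + b) := by
    nlinarith [Real.sqrt_nonneg (1 + b)]
  have hw : 0 ≤ Real.sqrt (1 + (a + b)) := Real.sqrt_nonneg _
  nlinarith [sq_nonneg (Real.sqrt (1+a) + Real.sqrt (1+b) - 1 - Real.sqrt (1+(a+b))),
    mul_pos (sub_pos.mpr hu) (sub_pos.mpr hv)]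

/-- for positive reals `x₁, …, x_n` with `n ≥ 2`,
`√(1+x₁) + ⋯ + √(1+x_n) > n - 1 + √(1 + x₁ + ⋯ + x_n)`. -/
theorem sqrt_one_add_sum (n : ℕ) (hn : 2 ≤ n) (x : Fin n → ℝ)
    (hx : ∀ i, 0 < x i) :
    (n : ℝ) - 1 + Real.sqrt (1 + ∑ i, x i) < ∑ i, Real.sqrt (1 + x i) := by
  induction n, hn using Nat.le_induction with
  | base =>
    rw [Fin.sum_univ_two, Fin.sum_univ_two]
    have := key_sqrt_two (x 0) (x 1) (hx 0) (hx 1)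
    push_cast
    linarith
  | succ n hn ih =>
    rw [Fin.sum_univ_succ, Fin.sum_univ_succ]
    have hpos : 0 < n := by omega
    have hS : 0 < ∑ i : Fin n, x i.succ :=
      Finset.sum_pos (fun i _ => hx i.succ) ⟨⟨0, hpos⟩, Finset.mem_univ _⟩
    have h1 := key_sqrt_two (x 0) (∑ i : Fin n, x i.succ) (hx 0) hS
    have h2 := ih (fun i => x i.succ) (fun i => hx i.succ)
    push_cast at h2 ⊢
    linarith
end

section
/- Let $p_1\ne p_2$ be primes, $m\ge 3$, and $k_1,\dots,k_m$ positive integers with $k=k_1+\dots+k_m\le p_1p_2$. Then there do not exist positive integers $\lambda_1,\dots,\lambda_m$ with $\lambda_i\, p_1p_2 = k_i(k-k_i)$ for all $i$; consequently no $(p_1p_2+1,m;k_1,\dots,k_m;\lambda_1,\dots,\lambda_m)$-GSEDF exists. -/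
lemma sum_extDiffCount_erase_zero {G : Type} [AddCommGroup G] [Fintype G] [DecidableEq G]
    (A B : Finset G) (hAB : Disjoint A B) :
    ∑ g ∈ Finset.univ.erase (0 : G), extDiffCount A B g = A.card * B.card := by
  classical
  have h0 : extDiffCount A B 0 = 0 := by
    unfold extDiffCount
    rw [Finset.filter_congr_decidable, Finset.card_eq_zero, Finset.filter_eq_empty_iff]
    rintro ⟨a, b⟩ hab hab0
    simp only [Finset.mem_product] at hab
    have : a = b := sub_eq_zero.mp hab0
    exact (Finset.disjoint_left.mp hAB hab.1) (this ▸ hab.2)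
  have h1 : ∑ g : G, extDiffCount A B g = A.card * B.card := by
    rw [← Finset.card_product]
    rw [Finset.card_eq_sum_card_fiberwise (f := fun p : G × G => p.1 - p.2)
      (t := Finset.univ) (fun x _ => Finset.mem_univ _)]
    apply Finset.sum_congr rfl
    intro g _
    unfold extDiffCount
    rw [Finset.filter_congr_decidable]
  have h2 := Finset.add_sum_erase Finset.univ (extDiffCount A B) (Finset.mem_univ (0 : G))
  omega

lemma gsedf_arith (p1 p2 m : ℕ) (hp1 : p1.Prime) (hp2 : p2.Prime)
    (hne : p1 ≠ p2) (hm : 3 ≤ m)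
    (k : Fin m → ℕ) (hk : ∀ i, 0 < k i) (hsum : (∑ i, k i) ≤ p1 * p2)
    (lam : Fin m → ℕ) (hlam : ∀ i, 0 < lam i)
    (heq : ∀ i, lam i * (p1 * p2) = k i * ((∑ j, k j) - k i)) : False := by
  classical
  set K := ∑ j, k j with hK
  have hcop : Nat.Coprime p1 p2 := (Nat.coprime_primes hp1 hp2).mpr hne
  have hmpos : 0 < m := by omega
  -- basic bounds for each index
  have hbounds : ∀ r : Fin m, k r + 1 ≤ K ∧ k r < p1 * p2 ∧ 0 < K - k r ∧ K - k r < p1 * p2 := by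
    intro r
    obtain ⟨j, hj⟩ : ∃ j : Fin m, j ≠ r := by
      haveI : Nontrivial (Fin m) := Fin.nontrivial_iff_two_le.mpr (by omega)
      exact exists_ne r
    have h1 : k r + k j ≤ K := by
      have := Finset.add_sum_erase Finset.univ k (Finset.mem_univ r)
      have hjmem : j ∈ Finset.univ.erase r := Finset.mem_erase.mpr ⟨hj, Finset.mem_univ j⟩
      have := Finset.single_le_sum (f := k) (fun i _ => Nat.zero_le _) hjmem
      omega
    have hkj := hk j
    have hkr := hk r
    omega
  -- divisibility structure
  have hdvd : ∀ r : Fin m, (p1 ∣ k r ∧ p2 ∣ (K - k r)) ∨ (p2 ∣ k r ∧ p1 ∣ (K - k r)) := by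
    intro r
    have hprod : p1 * p2 ∣ k r * (K - k r) := ⟨lam r, by rw [← heq r]; ring⟩
    have h1 : p1 ∣ k r ∨ p1 ∣ (K - k r) :=
      (Nat.Prime.dvd_mul hp1).mp (dvd_trans (Dvd.intro p2 rfl) hprod)
    have h2 : p2 ∣ k r ∨ p2 ∣ (K - k r) :=
      (Nat.Prime.dvd_mul hp2).mp (dvd_trans (Dvd.intro_left p1 rfl) hprod)
    obtain ⟨hb1, hb2, hb3, hb4⟩ := hbounds r
    have hno1 : ¬ (p1 ∣ k r ∧ p2 ∣ k r) := by
      rintro ⟨ha, hb⟩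
      have := Nat.le_of_dvd (hk r) (hcop.mul_dvd_of_dvd_of_dvd ha hb)
      omega
    have hno2 : ¬ (p1 ∣ (K - k r) ∧ p2 ∣ (K - k r)) := by
      rintro ⟨ha, hb⟩
      have := Nat.le_of_dvd hb3 (hcop.mul_dvd_of_dvd_of_dvd ha hb)
      omega
    tauto
  -- fix i = 0
  have i0 : Fin m := ⟨0, hmpos⟩
  set x := k (⟨0, hmpos⟩ : Fin m) with hx
  set y := K - x with hy
  obtain ⟨hb1, hb2, hb3, hb4⟩ := hbounds ⟨0, hmpos⟩
  have hxy : x + y = K := by omega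
  -- modular equality helper
  have modeq_mul : ∀ a b : ℕ, a ≡ b [MOD p1] → a ≡ b [MOD p2] → a < p1 * p2 → b < p1 * p2 → a = b := by
    intro a b h1 h2 ha hb
    exact Nat.ModEq.eq_of_lt_of_lt ((Nat.modEq_and_modEq_iff_modEq_mul hcop).mp ⟨h1, h2⟩) ha hb
  have hval : ∀ r : Fin m, k r = x ∨ k r = y := by
    intro r
    obtain ⟨hc1, hc2, hc3, hc4⟩ := hbounds r
    -- k r ≡ K mod p means p ∣ K - k r
    rcases hdvd ⟨0, hmpos⟩ with ⟨h1x, h2y⟩ | ⟨h2x, h1y⟩ <;>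
      rcases hdvd r with ⟨h1r, h2r⟩ | ⟨h2r, h1r⟩
    · -- same type 1 : k r ≡ x mod p1 (both 0), mod p2 (both ≡ K)
      left
      refine modeq_mul _ _ ((Nat.modEq_zero_iff_dvd.mpr h1r).trans (Nat.modEq_zero_iff_dvd.mpr h1x).symm) ?_ hc2 hb2
      have e1 : k r ≡ K [MOD p2] := (Nat.modEq_iff_dvd' (by omega)).mpr h2r
      have e2 : x ≡ K [MOD p2] := (Nat.modEq_iff_dvd' (by omega)).mpr h2y
      exact e1.trans e2.symm
    · -- cross : k r = y
      right
      refine modeq_mul _ _ ?_ ?_ hc2 hb4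
      · -- mod p1 : k r ≡ K, y = K - x ≡ K since p1 ∣ x
        have e1 : k r ≡ K [MOD p1] := (Nat.modEq_iff_dvd' (by omega)).mpr h1r
        have e2 : y ≡ K [MOD p1] := (Nat.modEq_iff_dvd' (by omega)).mpr (by simpa [hy] using (show p1 ∣ K - y from by rw [hy]; rw [Nat.sub_sub_self (by omega)]; exact h1x))
        exact e1.trans e2.symm
      · exact (Nat.modEq_zero_iff_dvd.mpr h2r).trans (Nat.modEq_zero_iff_dvd.mpr h2y).symm
    · -- cross : k r = y (i type2)
      right
      refine modeq_mul _ _ ?_ ?_ hc2 hb4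
      · exact (Nat.modEq_zero_iff_dvd.mpr h1r).trans (Nat.modEq_zero_iff_dvd.mpr h1y).symm
      · have e1 : k r ≡ K [MOD p2] := (Nat.modEq_iff_dvd' (by omega)).mpr h2r
        have e2 : y ≡ K [MOD p2] := (Nat.modEq_iff_dvd' (by omega)).mpr (by rw [hy, Nat.sub_sub_self (by omega)]; exact h2x)
        exact e1.trans e2.symm
    · -- same type 2
      left
      refine modeq_mul _ _ ?_ ((Nat.modEq_zero_iff_dvd.mpr h2r).trans (Nat.modEq_zero_iff_dvd.mpr h2x).symm) hc2 hb2
      have e1 : k r ≡ K [MOD p1] := (Nat.modEq_iff_dvd' (by omega)).mpr h1r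
      have e2 : x ≡ K [MOD p1] := (Nat.modEq_iff_dvd' (by omega)).mpr h1y
      exact e1.trans e2.symm
  have hxney : x ≠ y := by
    intro hxeqy
    rcases hdvd ⟨0, hmpos⟩ with ⟨h1, h2⟩ | ⟨h1, h2⟩
    · have h2' : p2 ∣ x := by rw [hxeqy]; exact h2
      have := Nat.le_of_dvd (by omega) (hcop.mul_dvd_of_dvd_of_dvd h1 h2')
      omega
    · have h2' : p1 ∣ x := by rw [hxeqy]; exact h2
      have := Nat.le_of_dvd (by omega) (hcop.mul_dvd_of_dvd_of_dvd h2' h1)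
      omega
  -- counting
  set S := Finset.univ.filter (fun r : Fin m => k r = x) with hS
  set T := Finset.univ.filter (fun r : Fin m => k r = y) with hT
  have hTeq : T = Finset.univ.filter (fun r => ¬ k r = x) := by
    ext r
    simp only [hT, Finset.mem_filter, Finset.mem_univ, true_and]
    constructor
    · intro h h'; exact hxney (h'.symm.trans h)
    · intro h; rcases hval r with h' | h'
      · exact absurd h' h
      · exact h'
  have hST : S.card + T.card = m := by
    rw [hS, hTeq, Finset.card_filter_add_card_filter_not]
    simp
  have hsplit : K = S.card * x + T.card * y := by
    have hadd := Finset.sum_filter_add_sum_filter_not Finset.univ (fun r => k r = x) k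
    have hSsum : ∑ r ∈ S, k r = S.card * x := by
      rw [Finset.sum_congr rfl (fun r hr => (Finset.mem_filter.mp hr).2), Finset.sum_const,
        smul_eq_mul]
    have hTsum : ∑ r ∈ T, k r = T.card * y := by
      rw [Finset.sum_congr rfl (fun r hr => (Finset.mem_filter.mp hr).2), Finset.sum_const,
        smul_eq_mul]
    rw [hK, ← hadd, ← hTeq]
    rw [show Finset.filter (fun r => k r = x) Finset.univ = S from hS.symm, hSsum, hTsum]
  have hSpos : 0 < S.card := by
    have : (⟨0, hmpos⟩ : Fin m) ∈ S := by
      rw [hS]; exact Finset.mem_filter.mpr ⟨Finset.mem_univ _, rfl⟩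
    exact Finset.card_pos.mpr ⟨_, this⟩
  have hypos : 0 < y := hb3
  have hxpos : 0 < x := hk _
  rcases Nat.eq_zero_or_pos T.card with ht0 | htpos
  · -- all values equal x : y = (m-1) * x
    have hsC : S.card = m := by omega
    have hKmx : K = m * x := by rw [hsplit, ht0, hsC]; ring
    have hyval : y = (m - 1) * x := by
      have : x + y = m * x := by rw [hxy, hKmx]
      have hm1 : m = (m - 1) + 1 := by omega
      rw [hm1] at this
      calc y = (m-1+1) * x - x := by omega
        _ = (m - 1) * x := by ring_nf; omega
    have hxdy : x ∣ y := Dvd.intro_left _ hyval.symm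
    have : p1 * p2 ∣ y := by
      rcases hdvd ⟨0, hmpos⟩ with ⟨h1, h2⟩ | ⟨h1, h2⟩
      · exact hcop.mul_dvd_of_dvd_of_dvd (dvd_trans h1 hxdy) h2
      · exact hcop.mul_dvd_of_dvd_of_dvd h2 (dvd_trans h1 hxdy)
    have := Nat.le_of_dvd hypos this
    omega
  · -- both values present : forces m = 2
    have h1 : x ≤ S.card * x := Nat.le_mul_of_pos_left x hSpos
    have h2 : y ≤ T.card * y := Nat.le_mul_of_pos_left y htpos
    have heqm : S.card * x + T.card * y = x + y := by omega
    have hx1 : S.card * x = x ∧ T.card * y = y := by omega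
    have hs1 : S.card = 1 := by
      have h := hx1.1
      have : S.card * x = 1 * x := by omega
      exact Nat.eq_of_mul_eq_mul_right hxpos this
    have ht1 : T.card = 1 := by
      have h := hx1.2
      have : T.card * y = 1 * y := by omega
      exact Nat.eq_of_mul_eq_mul_right hypos this
    omega


/-- nonexistence of `(p₁p₂+1, m; ...)`-GSEDF parameters for distinct primes
`p₁ ≠ p₂`, `m ≥ 3`, `k_1 + ... + k_m ≤ p₁p₂`, and of the GSEDF itself. -/
theorem gsedf_nonexistence_two_primes (p1 p2 m : ℕ) (hp1 : p1.Prime) (hp2 : p2.Prime)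
    (hne : p1 ≠ p2) (hm : 3 ≤ m)
    (k : Fin m → ℕ) (hk : ∀ i, 0 < k i) (hsum : (∑ i, k i) ≤ p1 * p2) :
    (¬ ∃ lam : Fin m → ℕ, (∀ i, 0 < lam i) ∧
        ∀ i, lam i * (p1 * p2) = k i * ((∑ j, k j) - k i)) ∧
    ∀ (G : Type) [AddCommGroup G] [Fintype G]
      (D : Fin m → Finset G) (lam : Fin m → ℕ),
        ¬ IsGSEDF (p1 * p2 + 1) m D k lam := by
  constructor
  · rintro ⟨lam, hlam, heq⟩
    exact gsedf_arith p1 p2 m hp1 hp2 hne hm k hk hsum lam hlam heq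
  · intro G _ _ D lam h
    classical
    obtain ⟨hcard, hDcard, hkpos, hlampos, hdisj, hcount⟩ := h
    have heq : ∀ i, lam i * (p1 * p2) = k i * ((∑ j, k j) - k i) := by
      intro i
      have hswap :
          ∑ g ∈ Finset.univ.erase (0 : G),
              ∑ j ∈ Finset.univ.filter (· ≠ i), extDiffCount (D i) (D j) g
            = ∑ j ∈ Finset.univ.filter (· ≠ i),
              ∑ g ∈ Finset.univ.erase (0 : G), extDiffCount (D i) (D j) g :=
        Finset.sum_comm
      have hL : ∑ g ∈ Finset.univ.erase (0 : G),
          ∑ j ∈ Finset.univ.filter (· ≠ i), extDiffCount (D i) (D j) g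
          = (p1 * p2) * lam i := by
        rw [Finset.sum_congr rfl (fun g hg => hcount i g (Finset.mem_erase.mp hg).1),
          Finset.sum_const, smul_eq_mul, Finset.card_erase_of_mem (Finset.mem_univ _),
          Finset.card_univ, hcard]
        simp
      have hR : ∑ j ∈ Finset.univ.filter (· ≠ i),
          ∑ g ∈ Finset.univ.erase (0 : G), extDiffCount (D i) (D j) g
          = k i * ((∑ j, k j) - k i) := by
        rw [Finset.sum_congr rfl (fun j hj => by
          have hji : j ≠ i := (Finset.mem_filter.mp hj).2
          rw [sum_extDiffCount_erase_zero (D i) (D j) (hdisj i j (Ne.symm hji)),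
            hDcard, hDcard])]
        rw [← Finset.mul_sum]
        congr 1
        rw [show Finset.univ.filter (· ≠ i) = Finset.univ.erase i from Finset.filter_ne' _ _]
        have := Finset.add_sum_erase Finset.univ k (Finset.mem_univ i)
        omega
      rw [mul_comm]
      rw [← hL, hswap, hR]
    exact gsedf_arith p1 p2 m hp1 hp2 hne hm k hkpos hsum lam hlampos heq
end

section
/- Suppose a $(v,3;k_1,k_2,k_3;\lambda_1,\lambda_2,\lambda_3)$-GSEDF exists with $k_1+k_2+k_3=v$, and either two of $k_1,k_2,k_3$ are equal or some $k_i=1$. Then $v\equiv 3\pmod 4$, $\{k_1,k_2,k_3\}$ is (up to order) $(1,\frac{v-1}{2},\frac{v-1}{2})$, and $(\lambda_1,\lambda_2,\lambda_3)=(1,\frac{v+1}{4},\frac{v+1}{4})$. -/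
lemma helper1 (v b c lb lc : ℕ) (hb : 0 < b) (hc : 0 < c)
    (hv : 1 + b + c = v)
    (h2 : lb * (v - 1) = b * (v - b)) (h3 : lc * (v - 1) = c * (v - c)) :
    v % 4 = 3 ∧ 2 * b = v - 1 ∧ 2 * c = v - 1 ∧ 4 * lb = v + 1 ∧ 4 * lc = v + 1 := by
  have hv3 : 3 ≤ v := by omega
  have hb' : b ≤ v := by omega
  have hc' : c ≤ v := by omega
  set V : ℤ := (v : ℤ) with hV
  set B : ℤ := (b : ℤ) with hB
  set C : ℤ := (c : ℤ) with hC
  have hCV : C = V - 1 - B := by simp [hV, hB, hC]; omega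
  have h2' : (lb : ℤ) * (V - 1) = B * (V - B) := by
    have := congrArg (Nat.cast : ℕ → ℤ) h2
    push_cast [Nat.cast_sub (by omega : 1 ≤ v), Nat.cast_sub hb'] at this
    linarith
  have h3' : (lc : ℤ) * (V - 1) = C * (V - C) := by
    have := congrArg (Nat.cast : ℕ → ℤ) h3
    push_cast [Nat.cast_sub (by omega : 1 ≤ v), Nat.cast_sub hc'] at this
    linarith
  have d1 : (V - 1) ∣ (B - B^2) := ⟨(lb : ℤ) - B, by linear_combination -h2'⟩
  have d2 : (V - 1) ∣ (C - C^2) := ⟨(lc : ℤ) - C, by linear_combination -h3'⟩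
  have d3 : (V - 1) ∣ (B + B^2) := by
    obtain ⟨t, ht⟩ := d2
    exact ⟨(1 - (V - 1) + 2*B) - t, by rw [hCV] at ht; linear_combination -ht⟩
  have d4 : (V - 1) ∣ 2 * B := by
    have := dvd_add d1 d3
    have e : (B - B^2) + (B + B^2) = 2 * B := by ring
    rwa [e] at this
  obtain ⟨t, ht⟩ := d4
  have hVpos : (2 : ℤ) ≤ V - 1 := by simp [hV]; omega
  have hBlt : B ≤ V - 2 := by simp [hV, hB]; omega
  have hBpos : 0 < B := by simp [hB]; omega
  have ht1 : t = 1 := by nlinarith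
  have h2B : 2 * B = V - 1 := by rw [ht, ht1]; ring
  have hbnat : 2 * b = v - 1 := by
    have : (2 * b : ℤ) = (v : ℤ) - 1 := by push_cast; linarith [h2B]
    omega
  have hcnat : 2 * c = v - 1 := by omega
  have hlb : 4 * lb = v + 1 := by
    have h4 : (4 * lb : ℤ) * (V - 1) = (V + 1) * (V - 1) := by
      linear_combination 4 * h2' + (V + 1 - 2*B) * h2B
    have : (4 * lb : ℤ) = V + 1 := by
      have hne : (V - 1) ≠ 0 := by omega
      exact mul_right_cancel₀ hne h4
    have : (4 * lb : ℤ) = (v : ℤ) + 1 := this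
    omega
  have hlc : 4 * lc = v + 1 := by
    have h2C : 2 * C = V - 1 := by rw [hCV]; linarith
    have h4 : (4 * lc : ℤ) * (V - 1) = (V + 1) * (V - 1) := by
      linear_combination 4 * h3' + (V + 1 - 2*C) * h2C
    have : (4 * lc : ℤ) = V + 1 := by
      have hne : (V - 1) ≠ 0 := by omega
      exact mul_right_cancel₀ hne h4
    have : (4 * lc : ℤ) = (v : ℤ) + 1 := this
    omega
  exact ⟨by omega, hbnat, hcnat, hlb, hlc⟩

lemma helper2 (v a c la lc : ℕ) (ha : 0 < a) (hc : 0 < c) (hv : a + a + c = v)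
    (h1 : la * (v - 1) = a * (v - a)) (h3 : lc * (v - 1) = c * (v - c)) : c = 1 := by
  have hv3 : 3 ≤ v := by omega
  set V : ℤ := (v : ℤ) with hV
  set A : ℤ := (a : ℤ) with hA
  set C : ℤ := (c : ℤ) with hC
  have hCV : C = V - 2 * A := by simp [hV, hA, hC]; omega
  have h1' : (la : ℤ) * (V - 1) = A * (V - A) := by
    have := congrArg (Nat.cast : ℕ → ℤ) h1
    push_cast [Nat.cast_sub (by omega : 1 ≤ v), Nat.cast_sub (by omega : a ≤ v)] at this
    linarith
  have h3' : (lc : ℤ) * (V - 1) = C * (V - C) := by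
    have := congrArg (Nat.cast : ℕ → ℤ) h3
    push_cast [Nat.cast_sub (by omega : 1 ≤ v), Nat.cast_sub (by omega : c ≤ v)] at this
    linarith
  have d1 : (V - 1) ∣ (A - A^2) := ⟨(la : ℤ) - A, by linear_combination -h1'⟩
  have d2 : (V - 1) ∣ (C - C^2) := ⟨(lc : ℤ) - C, by linear_combination -h3'⟩
  have d3 : (V - 1) ∣ (2*A - 4*A^2) := by
    obtain ⟨t, ht⟩ := d2
    exact ⟨t - (4*A - V), by rw [hCV] at ht; linear_combination ht⟩
  have d4 : (V - 1) ∣ 2 * A := by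
    obtain ⟨s, hs⟩ := d1
    obtain ⟨t, ht⟩ := d3
    exact ⟨4*s - t, by linear_combination 4*hs - ht⟩
  obtain ⟨t, ht⟩ := d4
  have hVpos : (2 : ℤ) ≤ V - 1 := by simp [hV]; omega
  have hAle : 2 * A ≤ V - 1 := by simp [hV, hA]; omega
  have hApos : 0 < A := by simp [hA]; omega
  have ht1 : t = 1 := by nlinarith
  have h2A : 2 * A = V - 1 := by rw [ht, ht1]; ring
  have : 2 * a + 1 = v := by
    have : (2 * a : ℤ) = (v : ℤ) - 1 := by push_cast; linarith
    omega
  omega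

lemma sum_extDiffCount {G : Type*} [AddCommGroup G] [Fintype G] [DecidableEq G] (A B : Finset G)
    (h : Disjoint A B) :
    ∑ g ∈ Finset.univ.filter (· ≠ (0:G)), extDiffCount A B g = A.card * B.card := by
  classical
  have hext : ∀ g : G, extDiffCount A B g
      = ((A ×ˢ B).filter (fun p => p.1 - p.2 = g)).card := by
    intro g; unfold extDiffCount
    exact congrArg Finset.card (Finset.filter_congr_decidable (A ×ˢ B) (fun p => p.1 - p.2 = g) _)
  have h0 : ((A ×ˢ B).filter (fun p => p.1 - p.2 = (0:G))).card = 0 := by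
    rw [Finset.card_eq_zero, Finset.filter_eq_empty_iff]
    rintro ⟨x, y⟩ hxy hsub
    simp only [Finset.mem_product] at hxy
    have hx : x = y := sub_eq_zero.mp hsub
    exact (Finset.disjoint_left.mp h hxy.1) (hx ▸ hxy.2)
  have htot : (A ×ˢ B).card = ∑ g : G, ((A ×ˢ B).filter (fun p => p.1 - p.2 = g)).card :=
    Finset.card_eq_sum_card_fiberwise (fun x _ => Finset.mem_univ _)
  have hsplit : ∑ g : G, ((A ×ˢ B).filter (fun p => p.1 - p.2 = g)).card
      = ((A ×ˢ B).filter (fun p => p.1 - p.2 = (0:G))).card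
        + ∑ g ∈ Finset.univ.erase (0:G), ((A ×ˢ B).filter (fun p => p.1 - p.2 = g)).card :=
    (Finset.add_sum_erase _ _ (Finset.mem_univ _)).symm
  calc ∑ g ∈ Finset.univ.filter (· ≠ (0:G)), extDiffCount A B g
      = ∑ g ∈ Finset.univ.erase (0:G), ((A ×ˢ B).filter (fun p => p.1 - p.2 = g)).card := by
        rw [Finset.filter_ne']; exact Finset.sum_congr rfl (fun g _ => hext g)
    _ = (A ×ˢ B).card := by rw [htot, hsplit, h0, zero_add]
    _ = A.card * B.card := Finset.card_product A B

lemma three_perm_sum (f : Fin 3 → ℕ) (i j m : Fin 3) (hij : i ≠ j) (hmi : m ≠ i) (hmj : m ≠ j) :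
    f i + f j + f m = f 0 + f 1 + f 2 := by
  fin_cases i <;> fin_cases j <;> fin_cases m <;> simp_all <;> ring

/-- if a `(v,3;...)`-GSEDF exists with `k₁+k₂+k₃ = v` and either two of the
`k i` equal or some `k i = 1`, then `v ≡ 3 (mod 4)` and, up to order, the parameters are
`(1, (v-1)/2, (v-1)/2; 1, (v+1)/4, (v+1)/4)`. -/
theorem gsedf_three_partition_params {G : Type*} [AddCommGroup G] [Fintype G] (v : ℕ)
    (D : Fin 3 → Finset G) (k lam : Fin 3 → ℕ)
    (h : IsGSEDF v 3 D k lam)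
    (hsum : k 0 + k 1 + k 2 = v)
    (hcond : (∃ i j : Fin 3, i ≠ j ∧ k i = k j) ∨ (∃ i, k i = 1)) :
    v % 4 = 3 ∧
    ∃ σ : Equiv.Perm (Fin 3),
      k (σ 0) = 1 ∧ 2 * k (σ 1) = v - 1 ∧ 2 * k (σ 2) = v - 1 ∧
      lam (σ 0) = 1 ∧ 4 * lam (σ 1) = v + 1 ∧ 4 * lam (σ 2) = v + 1 := by
  classical
  obtain ⟨hcard, hk, hkpos, hlpos, hdisj, hlam⟩ := h
  have hk0 := hkpos 0; have hk1 := hkpos 1; have hk2 := hkpos 2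
  have hv3 : 3 ≤ v := by omega
  have key : ∀ i, lam i * (v - 1) = k i * (v - k i) := by
    intro i
    have hs1 : ∑ g ∈ Finset.univ.filter (· ≠ (0:G)),
        (∑ j ∈ Finset.univ.filter (· ≠ i), extDiffCount (D i) (D j) g) = (v - 1) * lam i := by
      rw [Finset.sum_congr rfl (fun g hg => hlam i g (Finset.mem_filter.mp hg).2),
        Finset.sum_const, smul_eq_mul, Finset.filter_ne',
        Finset.card_erase_of_mem (Finset.mem_univ _), Finset.card_univ, hcard]
    rw [Finset.sum_comm] at hs1
    have hs2 : ∀ j ∈ Finset.univ.filter (· ≠ i),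
        ∑ g ∈ Finset.univ.filter (· ≠ (0:G)), extDiffCount (D i) (D j) g = k i * k j := by
      intro j hj
      rw [sum_extDiffCount _ _ (hdisj i j (Ne.symm (Finset.mem_filter.mp hj).2)), hk, hk]
    rw [Finset.sum_congr rfl hs2, ← Finset.mul_sum] at hs1
    have hrest : ∑ j ∈ Finset.univ.filter (· ≠ i), k j = v - k i := by
      have h' := Finset.add_sum_erase Finset.univ k (Finset.mem_univ i)
      rw [Fin.sum_univ_three k] at h'
      rw [Finset.filter_ne']
      omega
    rw [hrest] at hs1
    rw [mul_comm]
    exact hs1.symm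
  have hone : ∃ i0 : Fin 3, k i0 = 1 := by
    rcases hcond with ⟨i, j, hij, heq⟩ | hx
    · have hcompl : (({i, j}ᶜ : Finset (Fin 3))).Nonempty := by
        rw [← Finset.card_pos, Finset.card_compl, Finset.card_pair hij]
        simp
      obtain ⟨m, hm⟩ := hcompl
      simp only [Finset.mem_compl, Finset.mem_insert, Finset.mem_singleton, not_or] at hm
      have hv' : k i + k i + k m = v := by
        have := three_perm_sum k i j m hij hm.1 hm.2
        omega
      exact ⟨m, helper2 v (k i) (k m) (lam i) (lam m) (hkpos i) (hkpos m) hv' (key i) (key m)⟩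
    · exact hx
  obtain ⟨i0, hi0⟩ := hone
  have hvne : 0 < v - 1 := by omega
  fin_cases i0
  · have hi0' : k 0 = 1 := hi0
    have hla : lam 0 = 1 := by
      have hk' := key 0
      rw [hi0', one_mul] at hk'
      exact Nat.eq_of_mul_eq_mul_right hvne (by rw [hk', one_mul])
    obtain ⟨hm, hb, hc, hlb, hlc⟩ := helper1 v (k 1) (k 2) (lam 1) (lam 2) hk1 hk2
      (by omega) (key 1) (key 2)
    exact ⟨hm, Equiv.refl _, hi0', hb, hc, hla, hlb, hlc⟩
  · have hi0' : k 1 = 1 := hi0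
    have hla : lam 1 = 1 := by
      have hk' := key 1
      rw [hi0', one_mul] at hk'
      exact Nat.eq_of_mul_eq_mul_right hvne (by rw [hk', one_mul])
    obtain ⟨hm, hb, hc, hlb, hlc⟩ := helper1 v (k 0) (k 2) (lam 0) (lam 2) hk0 hk2
      (by omega) (key 0) (key 2)
    refine ⟨hm, Equiv.swap 0 1, ?_, ?_, ?_, ?_, ?_, ?_⟩ <;>
      simp only [Equiv.swap_apply_left, Equiv.swap_apply_right,
        Equiv.swap_apply_of_ne_of_ne (by decide : (2:Fin 3) ≠ 0) (by decide : (2:Fin 3) ≠ 1)] <;>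
      assumption
  · have hi0' : k 2 = 1 := hi0
    have hla : lam 2 = 1 := by
      have hk' := key 2
      rw [hi0', one_mul] at hk'
      exact Nat.eq_of_mul_eq_mul_right hvne (by rw [hk', one_mul])
    obtain ⟨hm, hb, hc, hlb, hlc⟩ := helper1 v (k 1) (k 0) (lam 1) (lam 0) hk1 hk0
      (by omega) (key 1) (key 0)
    refine ⟨hm, Equiv.swap 0 2, ?_, ?_, ?_, ?_, ?_, ?_⟩ <;>
      simp only [Equiv.swap_apply_left, Equiv.swap_apply_right,
        Equiv.swap_apply_of_ne_of_ne (by decide : (1:Fin 3) ≠ 0) (by decide : (1:Fin 3) ≠ 2)] <;>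
      assumption
end

section
/- There does not exist a $(v,m;k_1,\dots,k_m;1,1,\dots,1)$-GSEDF with $m\ge 3$ and $k_i>1$ for some $i$. -/
lemma extDiff_unique {G : Type*} [AddCommGroup G] {A B : Finset G} {g : G}
    (h : extDiffCount A B g ≤ 1) {x₁ z₁ x₂ z₂ : G}
    (hx₁ : x₁ ∈ A) (hz₁ : z₁ ∈ B) (h₁ : x₁ - z₁ = g)
    (hx₂ : x₂ ∈ A) (hz₂ : z₂ ∈ B) (h₂ : x₂ - z₂ = g) : x₁ = x₂ ∧ z₁ = z₂ := by
  classical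
  unfold extDiffCount at h
  have key := Finset.card_le_one.mp h (x₁, z₁) ?_ (x₂, z₂) ?_
  · exact ⟨congrArg Prod.fst key, congrArg Prod.snd key⟩
  · simp [Finset.mem_filter, Finset.mem_product, hx₁, hz₁, h₁]
  · simp [Finset.mem_filter, Finset.mem_product, hx₂, hz₂, h₂]

lemma extDiff_exists {G : Type*} [AddCommGroup G] {A B : Finset G} {g : G}
    (h : extDiffCount A B g ≠ 0) : ∃ x ∈ A, ∃ z ∈ B, x - z = g := by
  classical
  unfold extDiffCount at h
  obtain ⟨⟨x, z⟩, hmem⟩ := Finset.card_ne_zero.mp h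
  simp only [Finset.mem_filter, Finset.mem_product] at hmem
  exact ⟨x, hmem.1.1, z, hmem.1.2, hmem.2⟩

lemma extDiff_ne_zero {G : Type*} [AddCommGroup G] {A B : Finset G} {g x z : G}
    (hx : x ∈ A) (hz : z ∈ B) (h : x - z = g) : extDiffCount A B g ≠ 0 := by
  classical
  unfold extDiffCount
  apply Finset.card_ne_zero.mpr
  exact ⟨(x, z), by simp [Finset.mem_filter, Finset.mem_product, hx, hz, h]⟩

/-- no GSEDF with all `λ i = 1` exists when `m ≥ 3` and some `k i > 1`. -/
theorem gsedf_all_one_nonexistence {G : Type*} [AddCommGroup G] [Fintype G] (v m : ℕ)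
    (hm : 3 ≤ m) (D : Fin m → Finset G) (k : Fin m → ℕ)
    (hbig : ∃ i, 1 < k i) :
    ¬ IsGSEDF v m D k (fun _ => 1) := by
  classical
  rintro ⟨hv, hcard, hkpos, hlam, hdisj, hext⟩
  have hext1 : ∀ i, ∀ g : G, g ≠ 0 →
      (∑ j ∈ Finset.univ.filter (· ≠ i), extDiffCount (D i) (D j) g) = 1 :=
    fun i g hg => hext i g hg
  obtain ⟨i₀, hki₀⟩ := hbig
  have hD : 1 < (D i₀).card := by rw [hcard]; exact hki₀
  obtain ⟨a, ha, b, hb, hab⟩ := Finset.one_lt_card.mp hD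
  -- each single term is at most 1
  have hterm : ∀ (i j : Fin m), j ≠ i → ∀ g : G, g ≠ 0 →
      extDiffCount (D i) (D j) g ≤ 1 := by
    intro i j hj g hg
    calc extDiffCount (D i) (D j) g
        ≤ ∑ j' ∈ Finset.univ.filter (· ≠ i), extDiffCount (D i) (D j') g :=
          Finset.single_le_sum (f := fun j' => extDiffCount (D i) (D j') g)
            (fun _ _ => Nat.zero_le _) (Finset.mem_filter.mpr ⟨Finset.mem_univ _, hj⟩)
      _ = 1 := hext1 i g hg
  -- uniqueness of external representation with minuend in block i
  have huniq : ∀ (i j₁ j₂ : Fin m), j₁ ≠ i → j₂ ≠ i → ∀ g : G, g ≠ 0 →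
      ∀ x₁ z₁ x₂ z₂ : G, x₁ ∈ D i → z₁ ∈ D j₁ → x₁ - z₁ = g →
      x₂ ∈ D i → z₂ ∈ D j₂ → x₂ - z₂ = g → x₁ = x₂ ∧ z₁ = z₂ := by
    intro i j₁ j₂ hj₁ hj₂ g hg x₁ z₁ x₂ z₂ hx₁ hz₁ h₁ hx₂ hz₂ h₂
    by_cases hj : j₁ = j₂
    · subst hj; exact extDiff_unique (hterm i j₁ hj₁ g hg) hx₁ hz₁ h₁ hx₂ hz₂ h₂
    · exfalso
      have hle : extDiffCount (D i) (D j₁) g + extDiffCount (D i) (D j₂) g ≤ 1 := by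
        have hpair : extDiffCount (D i) (D j₁) g + extDiffCount (D i) (D j₂) g
            = ∑ t ∈ ({j₁, j₂} : Finset (Fin m)), extDiffCount (D i) (D t) g :=
          (Finset.sum_pair (f := fun t => extDiffCount (D i) (D t) g) hj).symm
        rw [← hext1 i g hg, hpair]
        apply Finset.sum_le_sum_of_subset
        intro t ht
        simp only [Finset.mem_insert, Finset.mem_singleton] at ht
        simp only [Finset.mem_filter, Finset.mem_univ, true_and]
        rcases ht with rfl | rfl
        · exact hj₁
        · exact hj₂
      have h1 := extDiff_ne_zero hx₁ hz₁ h₁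
      have h2 := extDiff_ne_zero hx₂ hz₂ h₂
      omega
  -- existence of an external representation with minuend in block j
  have hex : ∀ (j : Fin m) (g : G), g ≠ 0 →
      ∃ l, l ≠ j ∧ ∃ u ∈ D j, ∃ w ∈ D l, u - w = g := by
    intro j g hg
    obtain ⟨l, hl, hne⟩ := Finset.exists_ne_zero_of_sum_ne_zero
      (by rw [hext1 j g hg]; omega :
        (∑ j' ∈ Finset.univ.filter (· ≠ j), extDiffCount (D j) (D j') g) ≠ 0)
    simp only [Finset.mem_filter, Finset.mem_univ, true_and] at hl
    obtain ⟨u, hu, w, hw, huw⟩ := extDiff_exists hne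
    exact ⟨l, hl, u, hu, w, hw, huw⟩
  -- two indices distinct from i₀
  have hcard2 : 1 < ((Finset.univ : Finset (Fin m)).erase i₀).card := by
    rw [Finset.card_erase_of_mem (Finset.mem_univ _), Finset.card_univ, Fintype.card_fin]
    omega
  obtain ⟨j₂, hj₂m, j₃, hj₃m, hj23⟩ := Finset.one_lt_card.mp hcard2
  have hj₂ : j₂ ≠ i₀ := Finset.ne_of_mem_erase hj₂m
  have hj₃ : j₃ ≠ i₀ := Finset.ne_of_mem_erase hj₃m
  have hδ : a - b ≠ 0 := sub_ne_zero.mpr hab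
  -- the block-j representation of a - b has subtrahend in D i₀
  have step : ∀ j : Fin m, j ≠ i₀ → ∃ u ∈ D j, ∃ w ∈ D i₀, u - w = a - b := by
    intro j hj
    obtain ⟨l, hlj, u, hu, w, hw, huw⟩ := hex j (a - b) hδ
    by_cases hl : l = i₀
    · subst hl; exact ⟨u, hu, w, hw, huw⟩
    · exfalso
      have hane : a ≠ u := by
        intro h
        exact (Finset.disjoint_left.mp (hdisj i₀ j (Ne.symm hj)) ha) (h ▸ hu)
      have he : a - u ≠ 0 := sub_ne_zero.mpr hane
      have h2 : b - w = a - u := by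
        have h' : u + b = a + w := sub_eq_sub_iff_add_eq_add.mp huw
        rw [sub_eq_sub_iff_add_eq_add, add_comm]
        exact h'
      obtain ⟨hab', -⟩ := huniq i₀ j l hj hl (a - u) he a u b w ha hu rfl hb hw h2
      exact hab hab'
  obtain ⟨u₂, hu₂, w₂, hw₂, h₂⟩ := step j₂ hj₂
  obtain ⟨u₃, hu₃, w₃, hw₃, h₃⟩ := step j₃ hj₃
  have hδ' : b - a ≠ 0 := sub_ne_zero.mpr (Ne.symm hab)
  have g₂ : w₂ - u₂ = b - a := by rw [← neg_sub, h₂, neg_sub]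
  have g₃ : w₃ - u₃ = b - a := by rw [← neg_sub, h₃, neg_sub]
  obtain ⟨-, hu⟩ := huniq i₀ j₂ j₃ hj₂ hj₃ (b - a) hδ' w₂ u₂ w₃ u₃ hw₂ hu₂ g₂ hw₃ hu₃ g₃
  exact (Finset.disjoint_left.mp (hdisj j₂ j₃ hj23) hu₂) (hu ▸ hu₃)
end

section
/- If a $(v,2;k_1,k_2;\lambda_1,\lambda_2)$-GSEDF exists then $\lambda_1=\lambda_2$; moreover if $k_1$ and $k_2$ are both prime then $\lambda_1=\lambda_2=1$. -/
lemma sum_extDiffCount_s15 {G : Type*} [AddCommGroup G] [Fintype G]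
    (A B : Finset G) (hd : Disjoint A B) :
    letI := Classical.decEq G
    ∑ g ∈ Finset.univ.erase (0 : G), extDiffCount A B g = A.card * B.card := by
  letI := Classical.decEq G
  have h0 : extDiffCount A B 0 = 0 := by
    unfold extDiffCount
    rw [Finset.card_eq_zero, Finset.filter_eq_empty_iff]
    rintro ⟨a, b⟩ hab
    simp only [Finset.mem_product] at hab
    intro hab0
    have hab' : a = b := by
      have := hab0
      simpa [sub_eq_zero] using this
    exact (Finset.disjoint_left.mp hd hab.1 (hab' ▸ hab.2))
  have htot : ∑ g ∈ Finset.univ, extDiffCount A B g = A.card * B.card := by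
    unfold extDiffCount
    rw [← Finset.card_product]
    exact (Finset.card_eq_sum_card_fiberwise (fun p _ => Finset.mem_univ _)).symm
  have key := Finset.add_sum_erase Finset.univ (extDiffCount A B) (Finset.mem_univ (0 : G))
  rw [h0, zero_add] at key
  rw [key, htot]

/-- in a `(v, 2; k₁, k₂; λ₁, λ₂)`-GSEDF we have `λ₁ = λ₂`; and if both
`k₁` and `k₂` are prime then `λ₁ = λ₂ = 1`. -/
theorem gsedf_two_lambda_eq {G : Type*} [AddCommGroup G] [Fintype G] (v : ℕ)
    (D : Fin 2 → Finset G) (k lam : Fin 2 → ℕ)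
    (h : IsGSEDF v 2 D k lam) :
    lam 0 = lam 1 ∧
    ((k 0).Prime → (k 1).Prime → lam 0 = 1 ∧ lam 1 = 1) := by
  letI := Classical.decEq G
  classical
  obtain ⟨hv, hcard, hk, hlam, hdisj, hcount⟩ := h
  have hd01 : Disjoint (D 0) (D 1) := hdisj 0 1 (by decide)
  have hf0 : (Finset.univ.filter (· ≠ (0 : Fin 2))) = {1} := by decide
  have hf1 : (Finset.univ.filter (· ≠ (1 : Fin 2))) = {0} := by decide
  have hc0 : ∀ g : G, g ≠ 0 → extDiffCount (D 0) (D 1) g = lam 0 := by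
    intro g hg
    have := hcount 0 g hg
    rwa [hf0, Finset.sum_singleton] at this
  have hc1 : ∀ g : G, g ≠ 0 → extDiffCount (D 1) (D 0) g = lam 1 := by
    intro g hg
    have := hcount 1 g hg
    rwa [hf1, Finset.sum_singleton] at this
  have hcarde : (Finset.univ.erase (0 : G)).card = Fintype.card G - 1 := by
    rw [Finset.card_erase_of_mem (Finset.mem_univ _), Finset.card_univ]
  have hsum0 : (Fintype.card G - 1) * lam 0 = k 0 * k 1 := by
    have hs := sum_extDiffCount_s15 (D 0) (D 1) hd01
    rw [Finset.sum_congr rfl (fun g hg => hc0 g (Finset.ne_of_mem_erase hg)),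
      Finset.sum_const, smul_eq_mul, hcarde, hcard 0, hcard 1] at hs
    exact hs
  have hsum1 : (Fintype.card G - 1) * lam 1 = k 0 * k 1 := by
    have hs := sum_extDiffCount_s15 (D 1) (D 0) hd01.symm
    rw [Finset.sum_congr rfl (fun g hg => hc1 g (Finset.ne_of_mem_erase hg)),
      Finset.sum_const, smul_eq_mul, hcarde, hcard 0, hcard 1, Nat.mul_comm (k 1)] at hs
    exact hs
  have hbound : k 0 + k 1 ≤ Fintype.card G := by
    calc k 0 + k 1 = ((D 0) ∪ (D 1)).card := by
          rw [Finset.card_union_of_disjoint hd01, hcard 0, hcard 1]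
      _ ≤ Fintype.card G := by
          rw [← Finset.card_univ]; exact Finset.card_le_card (Finset.subset_univ _)
  have hk0 := hk 0
  have hk1 := hk 1
  have hn : 0 < Fintype.card G - 1 := by omega
  have heq : lam 0 = lam 1 := Nat.eq_of_mul_eq_mul_left hn (hsum0.trans hsum1.symm)
  refine ⟨heq, fun hp hq => ?_⟩
  -- prime case
  set n := Fintype.card G - 1 with hn_def
  set p := k 0
  set q := k 1
  set d := lam 0 with hd_def
  have hd_pos : 0 < d := hlam 0
  have hnge : p + q - 1 ≤ n := by omega
  have hdp : d < p := by
    by_contra hle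
    push_neg at hle
    have h1 : (p + q - 1) * p ≤ n * d := Nat.mul_le_mul hnge hle
    rw [hsum0] at h1
    have h2 : p + q - 1 ≤ q := Nat.le_of_mul_le_mul_right (by rw [Nat.mul_comm q p]; exact h1) hk0
    have := hq.two_le
    have := hp.two_le
    omega
  have hdq : d < q := by
    by_contra hle
    push_neg at hle
    have h1 : (p + q - 1) * q ≤ n * d := Nat.mul_le_mul hnge hle
    rw [hsum0] at h1
    have h2 : p + q - 1 ≤ p := Nat.le_of_mul_le_mul_right h1 hk1
    have := hq.two_le
    have := hp.two_le
    omega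
  have hdvd : d ∣ p * q := ⟨n, by rw [← hsum0, Nat.mul_comm]⟩
  have hcop : d.Coprime p :=
    (hp.coprime_iff_not_dvd.mpr (fun hdd => absurd (Nat.le_of_dvd hd_pos hdd) (by omega))).symm
  have hdq' : d ∣ q := hcop.dvd_of_dvd_mul_left hdvd
  have hd1 : d = 1 := by
    rcases (Nat.Prime.eq_one_or_self_of_dvd hq d hdq') with h1 | h2
    · exact h1
    · omega
  exact ⟨hd1, heq ▸ hd1⟩
end
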